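/- Let F be a subfield of the complex numbers such that F is a finitely generated field extension of the rationals, and let f, g : F → ℂ be two field homomorphisms. Then there exists a field automorphism α of ℂ such that g = α ∘ f. -/

import Mathlib

open Cardinal in
theorem aux_exists_ringEquiv_of_algebraMaps {F K L : Type} [Field F] [Field K] [Field L]
    [Algebra F K] [Algebra F L] [IsAlgClosed K] [IsAlgClosed L]
    (hFc : #F ≤ ℵ₀) (hK : ℵ₀ < #K) (hKL : #K = #L) :
    ∃ ρ : K ≃+* L, ∀ x : F, ρ (algebraMap F K x) = algebraMap F L x := by
  obtain ⟨s, hs⟩ := exists_isTranscendenceBasis F K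
  obtain ⟨t, ht⟩ := exists_isTranscendenceBasis F L
  have hst : #s = #t := by
    rw [← IsAlgClosed.cardinal_eq_cardinal_transcendence_basis_of_aleph0_lt' _ hs hFc hK,
        ← IsAlgClosed.cardinal_eq_cardinal_transcendence_basis_of_aleph0_lt' _ ht hFc
          (hKL ▸ hK), hKL]
  obtain ⟨e⟩ := Cardinal.eq.1 hst
  letI := IsAlgClosed.isAlgClosure_of_transcendence_basis _ hs
  letI := IsAlgClosed.isAlgClosure_of_transcendence_basis _ ht
  let e' : Algebra.adjoin F (Set.range ((↑) : s → K)) ≃ₐ[F]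
      Algebra.adjoin F (Set.range ((↑) : t → L)) :=
    hs.1.aevalEquiv.symm.trans ((MvPolynomial.renameEquiv F e).trans ht.1.aevalEquiv)
  refine ⟨IsAlgClosure.equivOfEquiv K L e'.toRingEquiv, fun x => ?_⟩
  rw [IsScalarTower.algebraMap_apply F (Algebra.adjoin F (Set.range ((↑) : s → K))) K,
      IsAlgClosure.equivOfEquiv_algebraMap,
      show e'.toRingEquiv (algebraMap F _ x) = algebraMap F _ x from e'.commutes x,
      ← IsScalarTower.algebraMap_apply]

/-- Let `F` be a subfield of `ℂ` that is a finitely generated field extension of `ℚ`,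
and let `f, g : F → ℂ` be two field homomorphisms.  Then there exists a field
automorphism `α` of `ℂ` such that `g = α ∘ f`. -/
theorem exists_automorphism_comp_of_fg
    (F : IntermediateField ℚ ℂ) (hF : F.FG)
    (f g : F →+* ℂ) :
    ∃ α : ℂ ≃+* ℂ, ∀ x : F, g x = α (f x) := by
  have hFc : Cardinal.mk F ≤ Cardinal.aleph0 := by
    obtain ⟨S, hS⟩ := hF
    rw [← hS]
    refine (IntermediateField.cardinalMk_adjoin_le ℚ (S : Set ℂ)).trans ?_
    exact sup_le (sup_le Cardinal.mk_le_aleph0 Cardinal.mk_le_aleph0) le_rfl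
  have hK : Cardinal.aleph0 < Cardinal.mk ℂ := by
    rw [Cardinal.mk_complex]; exact Cardinal.aleph0_lt_continuum
  obtain ⟨ρ, hρ⟩ := @aux_exists_ringEquiv_of_algebraMaps F ℂ ℂ _ _ _
    f.toAlgebra g.toAlgebra _ _ hFc hK rfl
  exact ⟨ρ, fun x => (hρ x).symm⟩
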